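/- The Schreier graph of the Hanoi Towers group G_(k) acting on X^n (X = {1,…,k}, generators the states a_{(ij)}) is isomorphic to the Hanoi graph H_n^{(k)}: configurations of n disks on k pegs with edges given by legal single-disk moves, under the bijection sending x₁⋯x_n to the configuration where disk i lies on peg x_i. -/

import Mathlib

/-- The states of the Hanoi Towers automaton `A_(k)`: the trivial state `none = e` and
a state `a_{(ij)}` for each transposition `{i, j}` of the pegs (encoded with `i < j`). -/
def HanoiState (k : ℕ) := Option {p : Fin k × Fin k // p.1 < p.2}

/-- Transition function of `A_(k)`. -/
def htrans {k : ℕ} : HanoiState k → Fin k → HanoiState k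
  | none, _ => none
  | some p, x => if x = p.val.1 ∨ x = p.val.2 then none else some p

/-- Output function of `A_(k)`. -/
def hout {k : ℕ} : HanoiState k → Fin k → Fin k
  | none, x => x
  | some p, x => if x = p.val.1 then p.val.2 else if x = p.val.2 then p.val.1 else x

/-- The action of a state of `A_(k)` on words of length `n` (configurations are encoded
as functions `Fin n → Fin k`: the word `x₁⋯x_n` corresponds to `i ↦ x_i`). -/
def hactVec {k n : ℕ} (s : HanoiState k) (w : Fin n → Fin k) : Fin n → Fin k :=
  fun m => hout ((List.ofFn fun i : Fin n => w i).take m |>.foldl htrans s) (w m)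

/-- The Schreier graph of `G_(k)` acting on `X^n`, with generators the states
`a_{(ij)}` of the Hanoi Towers automaton. -/
def hanoiSchreier (k n : ℕ) : SimpleGraph (Fin n → Fin k) where
  Adj u v := u ≠ v ∧ ∃ p : {p : Fin k × Fin k // p.1 < p.2},
    hactVec (some p) u = v ∨ hactVec (some p) v = u
  symm := by
    constructor
    rintro u v ⟨h, p, h'⟩
    exact ⟨h.symm, p, h'.symm⟩
  loopless := by constructor; rintro u ⟨h, -⟩; exact h rfl

/-- The Hanoi graph `H_n^(k)`: vertices are the configurations of `n` disks on `k` pegs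
(disk `d` lies on peg `c d`; the placement on each peg is determined by disk sizes),
and edges are legal single-disk moves: the moved disk `d` is topmost on its peg (no
smaller disk on the same peg) and smaller than every disk on the target peg. -/
def hanoiGraph (k n : ℕ) : SimpleGraph (Fin n → Fin k) where
  Adj c c' := ∃ d : Fin n, c d ≠ c' d ∧ (∀ d', d' ≠ d → c d' = c' d') ∧
    (∀ d', c d' = c d → d ≤ d') ∧ (∀ d', c' d' = c' d → d ≤ d')
  symm := by
    constructor
    rintro c c' ⟨d, hne, hoth, hsrc, htgt⟩
    exact ⟨d, fun h => hne h.symm, fun d' hd' => (hoth d' hd').symm, htgt, hsrc⟩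
  loopless := by constructor; rintro c ⟨d, hne, -⟩; exact hne rfl

lemma foldl_htrans_none {k : ℕ} (l : List (Fin k)) : l.foldl htrans none = none := by
  induction l with
  | nil => rfl
  | cons a l ih => exact ih

lemma foldl_htrans_some {k : ℕ} (p : {p : Fin k × Fin k // p.1 < p.2}) (l : List (Fin k)) :
    l.foldl htrans (some p) =
      if ∀ x ∈ l, x ≠ p.val.1 ∧ x ≠ p.val.2 then some p else none := by
  induction l with
  | nil => simp; rfl
  | cons a l ih =>
    by_cases h : a = p.val.1 ∨ a = p.val.2
    · have : htrans (some p) a = none := by simp [htrans, h]; rfl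
      show List.foldl htrans (htrans (some p) a) l = _
      rw [this, foldl_htrans_none]
      have : ¬ ∀ x ∈ a :: l, x ≠ p.val.1 ∧ x ≠ p.val.2 := by
        intro hall
        rcases h with h | h
        · exact (hall a (by simp)).1 h
        · exact (hall a (by simp)).2 h
      rw [if_neg]
      intro hc
      exact this (by simpa using hc)
    · push_neg at h
      have ht : htrans (some p) a = some p := by simp [htrans, not_or.mpr h]; rfl
      show List.foldl htrans (htrans (some p) a) l = _
      rw [ht, ih]
      simp [h]; rfl

lemma take_cond {k n : ℕ} (w : Fin n → Fin k) (m : Fin n) (p : {p : Fin k × Fin k // p.1 < p.2}) :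
    (∀ x ∈ (List.ofFn fun i : Fin n => w i).take m, x ≠ p.val.1 ∧ x ≠ p.val.2) ↔
      ∀ j : Fin n, j < m → w j ≠ p.val.1 ∧ w j ≠ p.val.2 := by
  constructor
  · intro h j hj
    apply h
    rw [List.mem_take_iff_getElem]
    have hjm : (j:ℕ) < ↑m ⊓ (List.ofFn fun i : Fin n => w i).length := by
      simp only [Fin.lt_def] at hj
      simp only [List.length_ofFn, lt_inf_iff]
      omega
    exact ⟨j, hjm, by rw [List.getElem_ofFn]⟩
  · intro h x hx
    rw [List.mem_take_iff_getElem] at hx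
    obtain ⟨i, hi, hx⟩ := hx
    simp only [List.length_take, List.length_ofFn, lt_inf_iff] at hi
    rw [List.getElem_ofFn] at hx
    subst hx
    exact h ⟨i, hi.2⟩ (by simp [Fin.lt_def]; omega)

lemma hactVec_some {k n : ℕ} (p : {p : Fin k × Fin k // p.1 < p.2}) (w : Fin n → Fin k)
    (m : Fin n) :
    hactVec (some p) w m =
      if ∀ j : Fin n, j < m → w j ≠ p.val.1 ∧ w j ≠ p.val.2
      then hout (some p) (w m) else w m := by
  unfold hactVec
  rw [foldl_htrans_some]
  simp only [take_cond]
  split <;> simp [hout]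

lemma hanoi_of_hact {k n : ℕ} (p : {p : Fin k × Fin k // p.1 < p.2}) (u v : Fin n → Fin k)
    (hne : u ≠ v) (h : hactVec (some p) u = v) : (hanoiGraph k n).Adj u v := by
  have key : ∀ m : Fin n, v m =
      if ∀ j : Fin n, j < m → u j ≠ p.val.1 ∧ u j ≠ p.val.2
      then hout (some p) (u m) else u m := by
    intro m; rw [← congrFun h m, hactVec_some]
  -- characterize differing indices
  have diff : ∀ m : Fin n, u m ≠ v m →
      (∀ j : Fin n, j < m → u j ≠ p.val.1 ∧ u j ≠ p.val.2) ∧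
      (u m = p.val.1 ∨ u m = p.val.2) := by
    intro m hm
    rw [key m] at hm
    by_cases hc : ∀ j : Fin n, j < m → u j ≠ p.val.1 ∧ u j ≠ p.val.2
    · refine ⟨hc, ?_⟩
      by_contra hno
      push_neg at hno
      simp [hout, hno.1, hno.2] at hm
    · simp [hc] at hm
  obtain ⟨d, hd⟩ : ∃ d : Fin n, u d ≠ v d := by
    by_contra hall; push_neg at hall; exact hne (funext hall)
  obtain ⟨hcond, hmem⟩ := diff d hd
  have hud : u d = p.val.1 ∨ u d = p.val.2 := hmem
  have hvd : v d = p.val.2 ∨ v d = p.val.1 := by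
    rw [key d, if_pos hcond]
    rcases hud with h1 | h2
    · left; simp [hout, h1]
    · right
      have hne1 : u d ≠ p.val.1 := by rw [h2]; exact p.2.ne'
      simp [hout, h2, hne1]
  have hoth : ∀ d', d' ≠ d → u d' = v d' := by
    intro d' hd'
    by_contra hne'
    obtain ⟨hcond', hmem'⟩ := diff d' hne'
    rcases lt_trichotomy d' d with hlt | heq | hgt
    · exact absurd hmem' (not_or.mpr (hcond d' hlt))
    · exact hd' heq
    · exact absurd hmem (not_or.mpr (hcond' d hgt))
  refine ⟨d, hd, hoth, ?_, ?_⟩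
  · intro d' hd'
    by_contra hlt
    push_neg at hlt
    exact absurd hmem (not_or.mpr (hd' ▸ hcond d' hlt))
  · intro d' hd'
    by_contra hlt
    push_neg at hlt
    have := hcond d' hlt
    rw [hoth d' hlt.ne, hd'] at this
    rcases hvd with h1 | h2
    · exact this.2 h1
    · exact this.1 h2

lemma hact_of_hanoi {k n : ℕ} (u v : Fin n → Fin k) (h : (hanoiGraph k n).Adj u v) :
    (hanoiSchreier k n).Adj u v := by
  obtain ⟨d, hne, hoth, hsrc, htgt⟩ := h
  have huv : u ≠ v := fun h => hne (congrFun h d)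
  have hnotin : ∀ j : Fin n, j < d → u j ≠ u d ∧ u j ≠ v d := by
    intro j hj
    constructor
    · intro hh; exact absurd (hsrc j hh) (not_le.mpr hj)
    · intro hh
      rw [hoth j hj.ne] at hh
      exact absurd (htgt j hh) (not_le.mpr hj)
  rcases lt_or_gt_of_ne hne with hlt | hgt
  · refine ⟨huv, ⟨(u d, v d), hlt⟩, Or.inl ?_⟩
    funext m
    rw [hactVec_some]
    rcases lt_trichotomy m d with hm | hm | hm
    · rw [if_pos (fun j hj => hnotin j (hj.trans hm))]
      have hmm := hnotin m hm
      simp only [hout]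
      rw [if_neg hmm.1, if_neg hmm.2]
      exact hoth m hm.ne
    · subst hm
      rw [if_pos (fun j hj => hnotin j hj)]
      simp [hout]
    · rw [if_neg, hoth m hm.ne']
      intro hc
      exact (hc d hm).1 rfl
  · refine ⟨huv, ⟨(v d, u d), hgt⟩, Or.inl ?_⟩
    funext m
    rw [hactVec_some]
    rcases lt_trichotomy m d with hm | hm | hm
    · rw [if_pos (fun j hj => ((hnotin j (hj.trans hm)).symm : _ ∧ _))]
      have hmm := hnotin m hm
      simp only [hout]
      rw [if_neg hmm.2, if_neg hmm.1]
      exact hoth m hm.ne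
    · subst hm
      rw [if_pos (fun j hj => ((hnotin j hj).symm : _ ∧ _))]
      simp [hout, hne]
    · rw [if_neg, hoth m hm.ne']
      intro hc
      exact (hc d hm).2 rfl

/-- The Schreier graph of the Hanoi Towers group `G_(k)` acting on `X^n` is isomorphic
to the Hanoi graph `H_n^(k)` under the bijection sending the word `x₁⋯x_n` to the
configuration in which disk `i` lies on peg `x_i` (with our encoding of both vertex
sets as `Fin n → Fin k`, this bijection is the identity). -/
theorem stmt15 (k n : ℕ) : hanoiSchreier k n = hanoiGraph k n := by
  ext u v
  constructor
  · rintro ⟨hne, p, h | h⟩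
    · exact hanoi_of_hact p u v hne h
    · exact (hanoi_of_hact p v u hne.symm h).symm
  · exact fun h => hact_of_hanoi u v h
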